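/- In an e-ring, for projections p,q the following are equivalent: (i) pq ∈ P; (ii) pq ∈ E; (iii) pq = qp; (iv) pq = pqp. Moreover, if these hold then pq is the infimum of p and q in E. -/
import Mathlib


/-- An e-ring: an associative unital ring `R` together with a set `E` of effects.
`E⁺` is the additive submonoid generated by `E` (the set of finite sums of effects). -/
structure ERing (R : Type*) [Ring R] where
  E : Set R
  zero_mem : (0:R) ∈ E
  one_mem : (1:R) ∈ E
  compl_mem : ∀ e ∈ E, 1 - e ∈ E
  ax_i : ∀ a ∈ AddSubmonoid.closure E, -a ∈ AddSubmonoid.closure E → a = 0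
  ax_ii : ∀ a ∈ AddSubmonoid.closure E, 1 - a ∈ AddSubmonoid.closure E → a ∈ E
  ax_iii : ∀ a ∈ AddSubmonoid.closure E, ∀ b ∈ AddSubmonoid.closure E,
    a * b = b * a → a * b ∈ AddSubmonoid.closure E
  ax_iv : ∀ a ∈ AddSubmonoid.closure E, ∀ b ∈ AddSubmonoid.closure E,
    a * b * a ∈ AddSubmonoid.closure E
  ax_v : ∀ a ∈ AddSubmonoid.closure E, ∀ b ∈ AddSubmonoid.closure E,
    a * b * a = 0 → a * b = 0 ∧ b * a = 0
  ax_vi : ∀ a ∈ AddSubmonoid.closure E, ∀ b ∈ AddSubmonoid.closure E,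
    (a - b) * (a - b) ∈ AddSubmonoid.closure E

namespace ERing

variable {R : Type*} [Ring R]

/-- The positive cone `E⁺`: all finite sums of effects. -/
def Ep (S : ERing R) : Set R := (AddSubmonoid.closure S.E : Set R)

/-- The directed group `G = E⁺ − E⁺` (as a subset of `R`). -/
def G (S : ERing R) : Set R := {x | ∃ a ∈ S.Ep, ∃ b ∈ S.Ep, x = a - b}

/-- The partial order with positive cone `E⁺`: `g ≤ h` iff `h − g ∈ E⁺`. -/
def le (S : ERing R) (g h : R) : Prop := h - g ∈ S.Ep

/-- The set of projections: idempotent elements of `G`. -/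
def P (S : ERing R) : Set R := {p | p ∈ S.G ∧ p * p = p}

end ERing

namespace ERing

lemma my_memC_of_E {R : Type*} [Ring R] (S : ERing R) {a : R} (h : a ∈ S.E) :
    a ∈ AddSubmonoid.closure S.E := AddSubmonoid.subset_closure h

lemma my_proj_mem_C {R : Type*} [Ring R] (S : ERing R) {p : R} (hp : p ∈ S.P) :
    p ∈ AddSubmonoid.closure S.E := by
  obtain ⟨⟨a, ha, b, hb, hab⟩, hpp⟩ := hp
  have h := S.ax_vi a ha b hb
  rwa [← hab, hpp] at h

lemma my_proj_mem_E {R : Type*} [Ring R] (S : ERing R) {p : R} (hp : p ∈ S.P) :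
    p ∈ S.E := by
  obtain ⟨⟨a, ha, b, hb, hab⟩, hpp⟩ := hp
  have h1 : p ∈ AddSubmonoid.closure S.E := S.my_proj_mem_C ⟨⟨a, ha, b, hb, hab⟩, hpp⟩
  have h2 : (1 - p) ∈ AddSubmonoid.closure S.E := by
    apply S.my_proj_mem_C
    refine ⟨⟨1 + b, AddSubmonoid.add_mem _ (S.my_memC_of_E S.one_mem) hb, a, ha, by
      rw [hab]; abel⟩, ?_⟩
    have e : (1 - p) * (1 - p) = 1 - p - p + p * p := by noncomm_ring
    rw [e, hpp]; abel
  exact S.ax_ii p h1 h2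

end ERing

theorem stmt11 {R : Type*} [Ring R] (S : ERing R) :
    ∀ p ∈ S.P, ∀ q ∈ S.P,
      List.TFAE [p * q ∈ S.P, p * q ∈ S.E, p * q = q * p, p * q = p * q * p] ∧
      (p * q = q * p →
        p * q ∈ S.E ∧ S.le (p * q) p ∧ S.le (p * q) q ∧
        ∀ e ∈ S.E, S.le e p → S.le e q → S.le e (p * q)) := by
  intro p hp q hq
  obtain ⟨hpG, hpp⟩ := hp
  obtain ⟨hqG, hqq⟩ := hq
  have hpE : p ∈ S.E := S.my_proj_mem_E ⟨hpG, hpp⟩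
  have hqE : q ∈ S.E := S.my_proj_mem_E ⟨hqG, hqq⟩
  have hpC : p ∈ AddSubmonoid.closure S.E := AddSubmonoid.subset_closure hpE
  have hqC : q ∈ AddSubmonoid.closure S.E := AddSubmonoid.subset_closure hqE
  have hp'C : (1 - p) ∈ AddSubmonoid.closure S.E :=
    AddSubmonoid.subset_closure (S.compl_mem p hpE)
  have hq'C : (1 - q) ∈ AddSubmonoid.closure S.E :=
    AddSubmonoid.subset_closure (S.compl_mem q hqE)
  have hp0 : (1 - p) * p = 0 := by rw [sub_mul, one_mul, hpp, sub_self]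
  have hq0 : q * (1 - q) = 0 := by rw [mul_sub, mul_one, hqq, sub_self]
  -- (ii) → (iv) : p*q = p*q*p
  have h24 : p * q ∈ S.E → p * q = p * q * p := by
    intro h
    have hb : p * q ∈ AddSubmonoid.closure S.E := AddSubmonoid.subset_closure h
    have h0 : (1 - p) * (p * q) * (1 - p) = 0 := by
      calc (1 - p) * (p * q) * (1 - p) = ((1 - p) * p) * (q * (1 - p)) := by noncomm_ring
        _ = 0 := by rw [hp0, zero_mul]
    have h1 := (S.ax_v _ hp'C _ hb h0).2
    have h2 : p * q - p * q * p = 0 := by rw [← h1]; noncomm_ring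
    exact sub_eq_zero.mp h2
  -- (ii) → p*q = q*(p*q)
  have h2B : p * q ∈ S.E → p * q = q * (p * q) := by
    intro h
    have hb : p * q ∈ AddSubmonoid.closure S.E := AddSubmonoid.subset_closure h
    have h0 : (1 - q) * (p * q) * (1 - q) = 0 := by
      calc (1 - q) * (p * q) * (1 - q) = ((1 - q) * p) * (q * (1 - q)) := by noncomm_ring
        _ = 0 := by rw [hq0, mul_zero]
    have h1 := (S.ax_v _ hq'C _ hb h0).1
    have h2 : p * q - q * (p * q) = 0 := by rw [← h1]; noncomm_ring
    exact sub_eq_zero.mp h2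
  -- (ii) → (iii)
  have h23 : p * q ∈ S.E → p * q = q * p := by
    intro h
    have h4 := h24 h
    have hB := h2B h
    have hbC : p * q ∈ AddSubmonoid.closure S.E := AddSubmonoid.subset_closure h
    have hrq : (p * q) * q = p * q := by rw [mul_assoc, hqq]
    have hrr : (p * q) * (p * q) = p * q := by
      calc (p * q) * (p * q) = (p * q * p) * q := by noncomm_ring
        _ = (p * q) * q := by rw [← h4]
        _ = p * q := hrq
    have haP : q - p * q ∈ S.P := by
      refine ⟨⟨q, hqC, p * q, hbC, rfl⟩, ?_⟩
      have e : (q - p * q) * (q - p * q) =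
          q * q - q * (p * q) - (p * q) * q + (p * q) * (p * q) := by noncomm_ring
      rw [e, hqq, ← hB, hrq, hrr]; abel
    have haC : q - p * q ∈ AddSubmonoid.closure S.E := S.my_proj_mem_C haP
    have h0 : (q - p * q) * p * (q - p * q) = 0 := by
      have e : (q - p * q) * p * (q - p * q) =
          q * (p * q) - (q * p) * (p * q) - ((p * q) * p) * q + ((p * q) * p) * (p * q) := by
        noncomm_ring
      have e3 : (q * p) * (p * q) = q * ((p * p) * q) := by noncomm_ring
      rw [e, ← h4, e3, hpp, ← hB, hrq, hrr]; abel
    have h1 := (S.ax_v _ haC _ hpC h0).1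
    have h2 : q * p - p * q * p = 0 := by rw [← h1]; noncomm_ring
    have h3 : q * p = p * q * p := sub_eq_zero.mp h2
    rw [h3, ← h4]
  -- (iii) → (ii)
  have h32 : p * q = q * p → p * q ∈ S.E := by
    intro h
    have hC : p * q ∈ AddSubmonoid.closure S.E := S.ax_iii p hpC q hqC h
    have hqp : p * q * p = p * q := by rw [h, mul_assoc, hpp]
    have e2 : p * (1 - q) * p = p * p - p * q * p := by noncomm_ring
    rw [hpp, hqp] at e2
    have h2 : p * (1 - q) * p ∈ AddSubmonoid.closure S.E := S.ax_iv p hpC (1 - q) hq'C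
    have h1C : (1 : R) - p * q ∈ AddSubmonoid.closure S.E := by
      have e : (1 : R) - p * q = (1 - p) + p * (1 - q) * p := by rw [e2]; abel
      rw [e]
      exact AddSubmonoid.add_mem _ hp'C h2
    exact S.ax_ii _ hC h1C
  -- (iv) → (i)
  have h41 : p * q = p * q * p → p * q ∈ S.P := by
    intro h
    have hC : p * q ∈ AddSubmonoid.closure S.E := by rw [h]; exact S.ax_iv p hpC q hqC
    refine ⟨⟨p * q, hC, 0, AddSubmonoid.zero_mem _, by rw [sub_zero]⟩, ?_⟩
    calc (p * q) * (p * q) = (p * q * p) * q := by noncomm_ring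
      _ = (p * q) * q := by rw [← h]
      _ = p * q := by rw [mul_assoc, hqq]
  constructor
  · tfae_have 1 → 2 := fun h => S.my_proj_mem_E h
    tfae_have 2 → 4 := h24
    tfae_have 4 → 1 := h41
    tfae_have 2 → 3 := h23
    tfae_have 3 → 2 := h32
    tfae_finish
  · intro h
    have hE : p * q ∈ S.E := h32 h
    have hqp : p * q * p = p * q := by rw [h, mul_assoc, hpp]
    have hqpq : q * p * q = p * q := by rw [← h, mul_assoc, hqq]
    refine ⟨hE, ?_, ?_, ?_⟩
    · -- p - p*q ∈ Ep
      show p - p * q ∈ S.Ep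
      have e2 : p * (1 - q) * p = p * p - p * q * p := by noncomm_ring
      rw [hpp, hqp] at e2
      have h2 : p * (1 - q) * p ∈ AddSubmonoid.closure S.E := S.ax_iv p hpC (1 - q) hq'C
      rw [← e2]
      exact h2
    · show q - p * q ∈ S.Ep
      have e2 : q * (1 - p) * q = q * q - q * p * q := by noncomm_ring
      rw [hqq, hqpq] at e2
      have h2 : q * (1 - p) * q ∈ AddSubmonoid.closure S.E := S.ax_iv q hqC (1 - p) hp'C
      rw [← e2]
      exact h2
    · intro e he hep heq
      have heC : e ∈ AddSubmonoid.closure S.E := AddSubmonoid.subset_closure he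
      have hpeC : p - e ∈ AddSubmonoid.closure S.E := hep
      have hqeC : q - e ∈ AddSubmonoid.closure S.E := heq
      -- e commutes with p: p*e = e = e*p
      have key : ∀ r : R, r * r = r → r ∈ AddSubmonoid.closure S.E →
          (1 - r) ∈ AddSubmonoid.closure S.E → r - e ∈ AddSubmonoid.closure S.E →
          r * e = e ∧ e * r = e := by
        intro r hrr hrC hr'C hreC
        have hr0 : (1 - r) * r = 0 := by rw [sub_mul, one_mul, hrr, sub_self]
        have hx : (1 - r) * e * (1 - r) ∈ AddSubmonoid.closure S.E :=
          S.ax_iv (1 - r) hr'C e heC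
        have hx' : (1 - r) * (r - e) * (1 - r) ∈ AddSubmonoid.closure S.E :=
          S.ax_iv (1 - r) hr'C (r - e) hreC
        have eneg : (1 - r) * (r - e) * (1 - r) = -((1 - r) * e * (1 - r)) := by
          have e1 : (1 - r) * (r - e) * (1 - r) =
              ((1 - r) * r) * (1 - r) - (1 - r) * e * (1 - r) := by noncomm_ring
          rw [e1, hr0, zero_mul, zero_sub]
        rw [eneg] at hx'
        have hx0 : (1 - r) * e * (1 - r) = 0 := S.ax_i _ hx hx'
        have hav := S.ax_v (1 - r) hr'C e heC hx0
        constructor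
        · have h1 : e - r * e = 0 := by rw [← hav.1]; noncomm_ring
          exact (sub_eq_zero.mp h1).symm
        · have h1 : e - e * r = 0 := by rw [← hav.2]; noncomm_ring
          exact (sub_eq_zero.mp h1).symm
      obtain ⟨hpe, hep'⟩ := key p hpp hpC hp'C hpeC
      obtain ⟨hqe, heq'⟩ := key q hqq hqC hq'C hqeC
      show p * q - e ∈ S.Ep
      have hk : p * (q - e) * p ∈ AddSubmonoid.closure S.E := S.ax_iv p hpC (q - e) hqeC
      have eid : p * (q - e) * p = p * q - e := by
        have e1 : p * (q - e) * p = p * q * p - p * (e * p) := by noncomm_ring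
        rw [e1, hqp, hep', hpe]
      rw [← eid]
      exact hk
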